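/- arXiv:1910.12079 — 3 statements merged into one kernel-verified Lean document; each statement's English description precedes it below -/
import Mathlib

section
/- If φ satisfies the Bowen property at scale ε₀ on C (i.e. V(C,φ,ε₀) := sup{|Φ(x,n) − Φ(y,n)| : (x,n) ∈ C, y ∈ B_n(x,ε₀)} < ∞), then P(C,φ,δ,ε₀) = P(C,φ,δ) for every δ > 0. -/
open Filter Topology

/-- Birkhoff sum `Φ(x,n) = Σ_{k=0}^{n-1} φ(f^k x)`. -/
noncomputable def birk {X : Type*} (f : X → X) (φ : X → ℝ) (x : X) (n : ℕ) : ℝ :=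
  ∑ k ∈ Finset.range n, φ (f^[k] x)

/-- The variation of a potential at scale ε. -/
noncomputable def varphi {X : Type*} [MetricSpace X] (φ : X → ℝ) (ε : ℝ) : ℝ :=
  sSup {v | ∃ x y : X, dist x y ≤ ε ∧ v = |φ x - φ y|}

/-- `E` is an `(n,δ)`-separated set. -/
def IsSep {X : Type*} [MetricSpace X] (f : X → X) (n : ℕ) (δ : ℝ) (E : Finset X) : Prop :=
  ∀ x ∈ E, ∀ y ∈ E, x ≠ y → ∃ k < n, δ < dist (f^[k] x) (f^[k] y)

/-- `Φ(x,n,ε) = sup { Φ(y,n) : y ∈ closed Bowen ball B_n(x,ε) }`; for `ε = 0` this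
equals `Φ(x,n)`. -/
noncomputable def phiSup {X : Type*} [MetricSpace X] (f : X → X) (φ : X → ℝ)
    (x : X) (n : ℕ) (ε : ℝ) : ℝ :=
  sSup {s | ∃ y : X, (∀ k < n, dist (f^[k] x) (f^[k] y) ≤ ε) ∧ s = birk f φ y n}

/-- Partition function `Θ(C,φ,n,δ,ε)` over `(n,δ)`-separated subsets of the section
`C^(n)`. -/
noncomputable def Theta {X : Type*} [MetricSpace X] (f : X → X) (φ : X → ℝ)
    (C : Set (X × ℕ)) (n : ℕ) (δ ε : ℝ) : ℝ :=
  sSup {s | ∃ E : Finset X, (∀ x ∈ E, (x, n) ∈ C) ∧ IsSep f n δ E ∧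
    s = ∑ x ∈ E, Real.exp (phiSup f φ x n ε)}

/-- The pressure `P(C,φ,δ,ε) = limsup_n (1/n) ln Θ(C,φ,n,δ,ε)`. -/
noncomputable def Pres {X : Type*} [MetricSpace X] (f : X → X) (φ : X → ℝ)
    (C : Set (X × ℕ)) (δ ε : ℝ) : ℝ :=
  Filter.limsup (fun n : ℕ => Real.log (Theta f φ C n δ ε) / n) Filter.atTop

/-- The topological pressure `P(φ) = lim_{δ→0} P(X×ℕ, φ, δ) = sup_{δ>0} P(X×ℕ, φ, δ)`. -/
noncomputable def PresTop {X : Type*} [MetricSpace X] (f : X → X) (φ : X → ℝ) : ℝ :=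
  ⨆ δ : {d : ℝ // 0 < d}, Pres f φ Set.univ (δ : ℝ) 0

section Aux

variable {X : Type*} [MetricSpace X] (f : X → X) (φ : X → ℝ)

/-- Birkhoff sums are bounded by `n * K` if `|φ| ≤ K`. -/
lemma birk_abs_le {K : ℝ} (hK : ∀ x, |φ x| ≤ K) (y : X) (n : ℕ) :
    |birk f φ y n| ≤ n * K := by
  calc |birk f φ y n| ≤ ∑ k ∈ Finset.range n, |φ (f^[k] y)| :=
        Finset.abs_sum_le_sum_abs _ _
    _ ≤ ∑ _k ∈ Finset.range n, K := Finset.sum_le_sum fun k _ => hK _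
    _ = n * K := by simp [mul_comm]

/-- At scale `0`, the supremum over the Bowen ball is just the Birkhoff sum. -/
lemma phiSup_zero (x : X) (n : ℕ) : phiSup f φ x n 0 = birk f φ x n := by
  have hset : {s | ∃ y : X, (∀ k < n, dist (f^[k] x) (f^[k] y) ≤ 0) ∧ s = birk f φ y n}
      = {birk f φ x n} := by
    ext s
    constructor
    · rintro ⟨y, hy, rfl⟩
      have : birk f φ y n = birk f φ x n := by
        refine Finset.sum_congr rfl fun k hk => ?_
        have hd := hy k (Finset.mem_range.mp hk)
        have : f^[k] x = f^[k] y := by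
          have := dist_le_zero.mp hd
          exact this
        rw [← this]
      simpa using this
    · rintro rfl
      exact ⟨x, fun k _ => by simp, rfl⟩
  rw [phiSup, hset, csSup_singleton]

/-- Cardinality bound for `(n,δ)`-separated sets in a compact space. -/
lemma exists_card_bound [CompactSpace X] (δ : ℝ) (hδ : 0 < δ) :
    ∃ m : ℕ, 1 ≤ m ∧ ∀ n : ℕ, ∀ E : Finset X, IsSep f n δ E → E.card ≤ m ^ n := by
  classical
  rcases isEmpty_or_nonempty X with hX | hX
  · exact ⟨1, le_refl 1, fun n E _ => by
      simp [Finset.eq_empty_of_isEmpty E]⟩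
  obtain ⟨t, htf, htc⟩ :=
    Metric.totallyBounded_iff.mp ((isCompact_univ : IsCompact (Set.univ : Set X)).totallyBounded) (δ / 2) (by linarith)
  haveI : Fintype t := htf.fintype
  have hmem : ∀ z : X, ∃ y : t, dist z (y : X) < δ / 2 := by
    intro z
    have := htc (Set.mem_univ z)
    simp only [Set.mem_iUnion, Metric.mem_ball] at this
    obtain ⟨y, hy, hdy⟩ := this
    exact ⟨⟨y, hy⟩, hdy⟩
  choose c hc using hmem
  have ht1 : 1 ≤ Fintype.card t := Fintype.card_pos_iff.mpr ⟨c (Classical.arbitrary X)⟩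
  refine ⟨Fintype.card t, ht1, fun n E hE => ?_⟩
  have hcard : E.card ≤ (Finset.univ : Finset (Fin n → t)).card := by
    refine Finset.card_le_card_of_injOn (fun x => fun k : Fin n => c (f^[(k : ℕ)] x))
      (fun x _ => Finset.mem_univ _) ?_
    intro x hx y hy hxy
    by_contra hne
    obtain ⟨k, hk, hd⟩ := hE x hx y hy hne
    have h1 : c (f^[k] x) = c (f^[k] y) := congrFun hxy ⟨k, hk⟩
    have h2 : dist (f^[k] x) (f^[k] y) < δ := by
      calc dist (f^[k] x) (f^[k] y)
          ≤ dist (f^[k] x) (c (f^[k] x) : X) + dist (c (f^[k] y) : X) (f^[k] y) := by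
            rw [h1]; exact dist_triangle _ _ _
        _ < δ / 2 + δ / 2 := by
            have := hc (f^[k] x)
            have := hc (f^[k] y)
            rw [dist_comm (c (f^[k] y) : X)]
            exact add_lt_add (hc _) (hc _)
        _ = δ := by ring
    linarith
  simpa [Finset.card_univ, Fintype.card_fun] using hcard

end Aux

/-- If `φ` satisfies the Bowen property at scale `ε₀` on `C`, i.e.
`V(C,φ,ε₀) = sup{|Φ(x,n) − Φ(y,n)| : (x,n) ∈ C, y ∈ B_n(x,ε₀)} < ∞`, then
`P(C,φ,δ,ε₀) = P(C,φ,δ)` for every `δ > 0`. -/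
theorem pres_eq_of_bowen_property {X : Type*} [MetricSpace X] [CompactSpace X]
    (f : X → X) (hf : Continuous f) (φ : X → ℝ) (hφ : Continuous φ)
    (C : Set (X × ℕ)) (ε₀ : ℝ) (hε₀ : 0 < ε₀)
    (hBowen : BddAbove {v | ∃ x : X, ∃ n : ℕ, (x, n) ∈ C ∧ ∃ y : X,
      (∀ k < n, dist (f^[k] x) (f^[k] y) ≤ ε₀) ∧ v = |birk f φ x n - birk f φ y n|}) :
    ∀ δ : ℝ, 0 < δ → Pres f φ C δ ε₀ = Pres f φ C δ 0 := by
  intro δ hδ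
  rcases isEmpty_or_nonempty X with hX | hX
  · -- trivial case: `X` is empty, so all partition functions agree
    have hth : ∀ ε : ℝ, ∀ n : ℕ, Theta f φ C n δ ε = Theta f φ C n δ 0 := by
      intro ε n
      unfold Theta
      congr 1
      ext s
      constructor <;> rintro ⟨E, h1, h2, rfl⟩ <;>
        exact ⟨E, h1, h2, by rw [Finset.eq_empty_of_isEmpty E]; simp⟩
    unfold Pres
    congr 1
    funext n
    rw [hth ε₀ n]
  -- Main case: `X` nonempty.
  classical
  -- A uniform bound on `|φ|`.
  obtain ⟨x₀, -, hx₀⟩ := (isCompact_univ : IsCompact (Set.univ : Set X)).exists_isMaxOn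
    Set.univ_nonempty hφ.abs.continuousOn
  set K : ℝ := |φ x₀| with hKdef
  have hK : ∀ x, |φ x| ≤ K := fun x => hx₀ (Set.mem_univ x)
  have hK0 : 0 ≤ K := abs_nonneg _
  -- The Bowen-property constant.
  obtain ⟨V₀, hV₀⟩ := hBowen
  set V : ℝ := max V₀ 0 with hVdef
  have hV0 : 0 ≤ V := le_max_right _ _
  have hV : ∀ x : X, ∀ n : ℕ, (x, n) ∈ C → ∀ y : X,
      (∀ k < n, dist (f^[k] x) (f^[k] y) ≤ ε₀) → |birk f φ x n - birk f φ y n| ≤ V := by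
    intro x n hxn y hy
    exact le_trans (hV₀ ⟨x, n, hxn, y, hy, rfl⟩) (le_max_left _ _)
  -- Cardinality bound for separated sets.
  obtain ⟨m, hm1, hm⟩ := exists_card_bound f δ hδ
  have hmR : (1 : ℝ) ≤ (m : ℝ) := by exact_mod_cast hm1
  have hlogm : 0 ≤ Real.log m := Real.log_nonneg hmR
  -- Basic facts about `phiSup`.
  have hball_ne : ∀ (x : X) (n : ℕ) (ε : ℝ), 0 ≤ ε →
      (birk f φ x n) ∈ {s | ∃ y : X, (∀ k < n, dist (f^[k] x) (f^[k] y) ≤ ε) ∧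
        s = birk f φ y n} :=
    fun x n ε hε => ⟨x, fun k _ => by simp [hε], rfl⟩
  have hphi_le : ∀ (x : X) (n : ℕ) (ε : ℝ), 0 ≤ ε → phiSup f φ x n ε ≤ n * K := by
    intro x n ε hε
    refine csSup_le ⟨_, hball_ne x n ε hε⟩ ?_
    rintro s ⟨y, _, rfl⟩
    exact le_trans (le_abs_self _) (birk_abs_le f φ hK y n)
  have hbdd : ∀ (x : X) (n : ℕ), (x, n) ∈ C →
      BddAbove {s | ∃ y : X, (∀ k < n, dist (f^[k] x) (f^[k] y) ≤ ε₀) ∧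
        s = birk f φ y n} := by
    intro x n hxn
    refine ⟨birk f φ x n + V, ?_⟩
    rintro s ⟨y, hy, rfl⟩
    have := hV x n hxn y hy
    have h2 : birk f φ y n - birk f φ x n ≤ V := by
      have := neg_abs_le (birk f φ x n - birk f φ y n)
      linarith [abs_le.mp (hV x n hxn y hy)]
    linarith
  have hphi_ge : ∀ (x : X) (n : ℕ), (x, n) ∈ C → birk f φ x n ≤ phiSup f φ x n ε₀ :=
    fun x n hxn => le_csSup (hbdd x n hxn) (hball_ne x n ε₀ hε₀.le)
  have hphi_ub : ∀ (x : X) (n : ℕ), (x, n) ∈ C →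
      phiSup f φ x n ε₀ ≤ birk f φ x n + V := by
    intro x n hxn
    refine csSup_le ⟨_, hball_ne x n ε₀ hε₀.le⟩ ?_
    rintro s ⟨y, hy, rfl⟩
    have h2 : birk f φ y n - birk f φ x n ≤ V := by
      linarith [abs_le.mp (hV x n hxn y hy)]
    linarith
  -- The set of partition sums.
  set S : ℕ → ℝ → Set ℝ := fun n ε =>
    {s | ∃ E : Finset X, (∀ x ∈ E, (x, n) ∈ C) ∧ IsSep f n δ E ∧
      s = ∑ x ∈ E, Real.exp (phiSup f φ x n ε)} with hSdef
  have hTheta : ∀ n ε, Theta f φ C n δ ε = sSup (S n ε) := fun n ε => rfl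
  have hzero_mem : ∀ n ε, (0 : ℝ) ∈ S n ε := by
    intro n ε
    exact ⟨∅, by simp, fun x hx => absurd hx (Finset.notMem_empty x), by simp⟩
  have hS_ub : ∀ (n : ℕ) (ε : ℝ), 0 ≤ ε → ∀ s ∈ S n ε,
      s ≤ (m : ℝ) ^ n * Real.exp (n * K) := by
    rintro n ε hε s ⟨E, hEC, hEsep, rfl⟩
    calc (∑ x ∈ E, Real.exp (phiSup f φ x n ε))
        ≤ ∑ _x ∈ E, Real.exp (n * K) :=
          Finset.sum_le_sum fun x _ => Real.exp_le_exp.mpr (hphi_le x n ε hε)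
      _ = E.card * Real.exp (n * K) := by simp [mul_comm]
      _ ≤ (m : ℝ) ^ n * Real.exp (n * K) := by
          have : (E.card : ℝ) ≤ (m : ℝ) ^ n := by exact_mod_cast hm n E hEsep
          exact mul_le_mul_of_nonneg_right this (Real.exp_pos _).le
  have hS_bdd : ∀ (n : ℕ) (ε : ℝ), 0 ≤ ε → BddAbove (S n ε) :=
    fun n ε hε => ⟨_, fun s hs => hS_ub n ε hε s hs⟩
  have hTheta_nonneg : ∀ (n : ℕ) (ε : ℝ), 0 ≤ ε → 0 ≤ Theta f φ C n δ ε :=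
    fun n ε hε => le_csSup (hS_bdd n ε hε) (hzero_mem n ε)
  have hTheta_le_exp : ∀ (n : ℕ) (ε : ℝ), 0 ≤ ε →
      Theta f φ C n δ ε ≤ (m : ℝ) ^ n * Real.exp (n * K) := by
    intro n ε hε
    refine Real.sSup_le (hS_ub n ε hε) ?_
    positivity
  -- Θ(n,0) ≤ Θ(n,ε₀)
  have hT01 : ∀ n : ℕ, Theta f φ C n δ 0 ≤ Theta f φ C n δ ε₀ := by
    intro n
    refine Real.sSup_le ?_ (hTheta_nonneg n ε₀ hε₀.le)
    rintro s ⟨E, hEC, hEsep, rfl⟩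
    have h1 : (∑ x ∈ E, Real.exp (phiSup f φ x n 0))
        ≤ ∑ x ∈ E, Real.exp (phiSup f φ x n ε₀) := by
      refine Finset.sum_le_sum fun x hx => Real.exp_le_exp.mpr ?_
      rw [phiSup_zero]
      exact hphi_ge x n (hEC x hx)
    exact le_trans h1 (le_csSup (hS_bdd n ε₀ hε₀.le) ⟨E, hEC, hEsep, rfl⟩)
  -- Θ(n,ε₀) ≤ e^V · Θ(n,0)
  have hT10 : ∀ n : ℕ, Theta f φ C n δ ε₀ ≤ Real.exp V * Theta f φ C n δ 0 := by
    intro n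
    refine Real.sSup_le ?_ (mul_nonneg (Real.exp_pos V).le (hTheta_nonneg n 0 le_rfl))
    rintro s ⟨E, hEC, hEsep, rfl⟩
    have h1 : (∑ x ∈ E, Real.exp (phiSup f φ x n ε₀))
        ≤ Real.exp V * ∑ x ∈ E, Real.exp (phiSup f φ x n 0) := by
      rw [Finset.mul_sum]
      refine Finset.sum_le_sum fun x hx => ?_
      rw [phiSup_zero, ← Real.exp_add]
      exact Real.exp_le_exp.mpr (by linarith [hphi_ub x n (hEC x hx)])
    refine le_trans h1 ?_
    exact mul_le_mul_of_nonneg_left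
      (le_csSup (hS_bdd n 0 le_rfl) ⟨E, hEC, hEsep, rfl⟩) (Real.exp_pos _).le
  -- Lower bound: if `Θ > 0` then `Θ ≥ e^{-nK}`.
  have hT_lb : ∀ (n : ℕ) (ε : ℝ), 0 ≤ ε →
      (∀ x : X, (x, n) ∈ C → birk f φ x n ≤ phiSup f φ x n ε) →
      0 < Theta f φ C n δ ε → Real.exp (-(n * K)) ≤ Theta f φ C n δ ε := by
    intro n ε hε hge hpos
    obtain ⟨s, hs, hspos⟩ := exists_lt_of_lt_csSup ⟨0, hzero_mem n ε⟩ hpos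
    obtain ⟨E, hEC, hEsep, rfl⟩ := hs
    have hEne : E.Nonempty := by
      by_contra h
      rw [Finset.not_nonempty_iff_eq_empty] at h
      simp [h] at hspos
    obtain ⟨z, hz⟩ := hEne
    have h1 : Real.exp (phiSup f φ z n ε) ≤ ∑ x ∈ E, Real.exp (phiSup f φ x n ε) :=
      Finset.single_le_sum (f := fun x => Real.exp (phiSup f φ x n ε))
        (fun y _ => (Real.exp_pos _).le) hz
    have h2 : Real.exp (-(n * K)) ≤ Real.exp (phiSup f φ z n ε) := by
      refine Real.exp_le_exp.mpr ?_
      have := hge z (hEC z hz)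
      have hb := neg_abs_le (birk f φ z n)
      have := birk_abs_le f φ hK z n
      linarith
    exact le_trans (le_trans h2 h1)
      (le_csSup (hS_bdd n ε hε) ⟨E, hEC, hEsep, rfl⟩)
  -- Bounds on `log Θ`.
  have hlog_ub : ∀ (n : ℕ) (ε : ℝ), 0 ≤ ε →
      Real.log (Theta f φ C n δ ε) ≤ n * (Real.log m + K) := by
    intro n ε hε
    rcases lt_or_ge 0 (Theta f φ C n δ ε) with hpos | hle
    · calc Real.log (Theta f φ C n δ ε)
          ≤ Real.log ((m : ℝ) ^ n * Real.exp (n * K)) :=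
            Real.log_le_log hpos (hTheta_le_exp n ε hε)
        _ = n * Real.log m + n * K := by
            rw [Real.log_mul (by positivity) (Real.exp_ne_zero _), Real.log_pow,
              Real.log_exp]
        _ = n * (Real.log m + K) := by ring
    · have : Theta f φ C n δ ε = 0 := le_antisymm hle (hTheta_nonneg n ε hε)
      rw [this, Real.log_zero]
      positivity
  have hlog_lb : ∀ (n : ℕ) (ε : ℝ), 0 ≤ ε →
      (∀ x : X, (x, n) ∈ C → birk f φ x n ≤ phiSup f φ x n ε) →
      -(n * K) ≤ Real.log (Theta f φ C n δ ε) := by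
    intro n ε hε hge
    rcases lt_or_ge 0 (Theta f φ C n δ ε) with hpos | hle
    · have := Real.log_le_log (Real.exp_pos _) (hT_lb n ε hε hge hpos)
      rwa [Real.log_exp] at this
    · have : Theta f φ C n δ ε = 0 := le_antisymm hle (hTheta_nonneg n ε hε)
      rw [this, Real.log_zero]
      have : (0:ℝ) ≤ n * K := by positivity
      linarith
  have hge0 : ∀ (n : ℕ) (x : X), (x, n) ∈ C → birk f φ x n ≤ phiSup f φ x n 0 :=
    fun n x _ => le_of_eq (phiSup_zero f φ x n).symm
  -- The two sequences.
  set u : ℕ → ℝ := fun n => Real.log (Theta f φ C n δ ε₀) / n with hudef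
  set v : ℕ → ℝ := fun n => Real.log (Theta f φ C n δ 0) / n with hvdef
  have hPu : Pres f φ C δ ε₀ = limsup u atTop := rfl
  have hPv : Pres f φ C δ 0 = limsup v atTop := rfl
  -- pointwise bounds
  have hlog01 : ∀ n : ℕ, Real.log (Theta f φ C n δ 0) ≤ Real.log (Theta f φ C n δ ε₀) := by
    intro n
    rcases lt_or_ge 0 (Theta f φ C n δ 0) with hpos | hle
    · exact Real.log_le_log hpos (hT01 n)
    · have h0 : Theta f φ C n δ 0 = 0 := le_antisymm hle (hTheta_nonneg n 0 le_rfl)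
      have h1 : Theta f φ C n δ ε₀ = 0 := by
        have := hT10 n
        rw [h0, mul_zero] at this
        exact le_antisymm this (hTheta_nonneg n ε₀ hε₀.le)
      rw [h0, h1]
  have hlog10 : ∀ n : ℕ,
      Real.log (Theta f φ C n δ ε₀) ≤ Real.log (Theta f φ C n δ 0) + V := by
    intro n
    rcases lt_or_ge 0 (Theta f φ C n δ 0) with hpos | hle
    · have hpos' : 0 < Theta f φ C n δ ε₀ := lt_of_lt_of_le hpos (hT01 n)
      calc Real.log (Theta f φ C n δ ε₀)
          ≤ Real.log (Real.exp V * Theta f φ C n δ 0) :=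
            Real.log_le_log hpos' (hT10 n)
        _ = Real.log (Theta f φ C n δ 0) + V := by
            rw [Real.log_mul (Real.exp_ne_zero _) (ne_of_gt hpos), Real.log_exp]; ring
    · have h0 : Theta f φ C n δ 0 = 0 := le_antisymm hle (hTheta_nonneg n 0 le_rfl)
      have h1 : Theta f φ C n δ ε₀ = 0 := by
        have := hT10 n
        rw [h0, mul_zero] at this
        exact le_antisymm this (hTheta_nonneg n ε₀ hε₀.le)
      rw [h0, h1]; simpa using hV0
  -- bounds on `u` and `v`
  have hdiv_bounds : ∀ (w : ℕ → ℝ),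
      (∀ n : ℕ, -(n * K) ≤ w n) → (∀ n : ℕ, w n ≤ n * (Real.log m + K)) →
      ∀ n : ℕ, -K ≤ w n / n ∧ w n / n ≤ Real.log m + K := by
    intro w hlb hub n
    rcases Nat.eq_zero_or_pos n with rfl | hn
    · simp only [Nat.cast_zero, div_zero]
      constructor <;> linarith
    · have hn' : (0:ℝ) < n := by exact_mod_cast hn
      constructor
      · rw [le_div_iff₀ hn']
        have := hlb n
        linarith [this]
      · rw [div_le_iff₀ hn']
        have := hub n
        linarith [this]
  have hubounds := hdiv_bounds (fun n => Real.log (Theta f φ C n δ ε₀))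
    (fun n => hlog_lb n ε₀ hε₀.le (fun x hx => hphi_ge x n hx))
    (fun n => hlog_ub n ε₀ hε₀.le)
  have hvbounds := hdiv_bounds (fun n => Real.log (Theta f φ C n δ 0))
    (fun n => hlog_lb n 0 le_rfl (fun x hx => hge0 n x hx))
    (fun n => hlog_ub n 0 le_rfl)
  have hu_bddAbove : IsBoundedUnder (· ≤ ·) atTop u :=
    isBoundedUnder_of ⟨Real.log m + K, fun n => (hubounds n).2⟩
  have hu_cobdd : IsCoboundedUnder (· ≤ ·) atTop u :=
    isCoboundedUnder_le_of_le atTop (fun n => (hubounds n).1)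
  have hv_bddAbove : IsBoundedUnder (· ≤ ·) atTop v :=
    isBoundedUnder_of ⟨Real.log m + K, fun n => (hvbounds n).2⟩
  have hv_cobdd : IsCoboundedUnder (· ≤ ·) atTop v :=
    isCoboundedUnder_le_of_le atTop (fun n => (hvbounds n).1)
  -- `limsup v ≤ limsup u`
  have hstep1 : limsup v atTop ≤ limsup u atTop := by
    refine limsup_le_limsup (Eventually.of_forall fun n => ?_) hv_cobdd hu_bddAbove
    rcases Nat.eq_zero_or_pos n with rfl | hn
    · simp [hudef, hvdef]
    · have hn' : (0:ℝ) < n := by exact_mod_cast hn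
      exact div_le_div_of_nonneg_right (hlog01 n) hn'.le
  -- `limsup u ≤ limsup v`
  have hstep2 : limsup u atTop ≤ limsup v atTop := by
    refine le_of_forall_pos_le_add fun η hη => ?_
    have hVn : Tendsto (fun n : ℕ => V / n) atTop (𝓝 0) :=
      tendsto_const_div_atTop_nhds_zero_nat V
    have hev : ∀ᶠ n : ℕ in atTop, V / n ≤ η := hVn.eventually (eventually_le_nhds hη)
    have hev2 : ∀ᶠ n : ℕ in atTop, u n ≤ v n + η := by
      filter_upwards [hev, eventually_ge_atTop 1] with n hn h1
      have hn' : (0:ℝ) < n := by exact_mod_cast h1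
      have huv : u n ≤ v n + V / n := by
        have h2 := hlog10 n
        calc u n = Real.log (Theta f φ C n δ ε₀) / n := rfl
          _ ≤ (Real.log (Theta f φ C n δ 0) + V) / n :=
              div_le_div_of_nonneg_right h2 hn'.le
          _ = v n + V / n := by rw [add_div]
      linarith
    have hvb' : IsBoundedUnder (· ≤ ·) atTop (fun n => v n + η) :=
      isBoundedUnder_of ⟨Real.log m + K + η, fun n => by
        have := (hvbounds n).2; simp only [hvdef]; linarith⟩
    have hvc' : IsCoboundedUnder (· ≤ ·) atTop (fun n => v n + η) :=
      isCoboundedUnder_le_of_le atTop (x := -K + η) (fun n => by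
        have h := (hvbounds n).1
        simp only [hvdef]
        linarith)
    have h1 : limsup u atTop ≤ limsup (fun n => v n + η) atTop :=
      limsup_le_limsup hev2 hu_cobdd hvb'
    have h2 : limsup (fun n => v n + η) atTop = limsup v atTop + η := by
      have := (OrderIso.addRight η).limsup_apply (u := v) (f := atTop)
        hv_bddAbove hv_cobdd hvb' hvc'
      simpa using this.symm
    rw [h2] at h1
    exact h1
  rw [hPu, hPv]
  exact le_antisymm hstep2 hstep1
end

section
/- For sequences C, C' in E and gap sequences r, r' with t_n(r) = t_n(r') and x_n(C) ≠ x_n(C'), if y δ-traces (C,r) and y' δ-traces (C',r'), and E is (N,2γ)-separated with 2δ < γ, then y and y' are (n(N+τ), γ)-separated, i.e. max_{0≤k<n(N+τ)} d(f^k(y), f^k(y')) > γ. -/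
open Filter Topology

/-- The transition times `t_k = Σ_{i<k} (N + r_i)` (so `t_0 = 0`). -/
def ttime (N : ℕ) (r : ℕ → ℕ) (k : ℕ) : ℕ :=
  ∑ i ∈ Finset.range k, (N + r i)

/-- `z` δ-traces the sequence of orbit segments `(C k, N)` with gaps `r`:
`d(f^{t_k + j} z, f^j (C k)) ≤ δ` for all `k` and `0 ≤ j < N`. -/
def Traces {X : Type*} [MetricSpace X] (f : X → X) (N : ℕ) (δ : ℝ)
    (C : ℕ → X) (r : ℕ → ℕ) (z : X) : Prop :=
  ∀ k, ∀ j < N, dist (f^[ttime N r k + j] z) (f^[j] (C k)) ≤ δ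

/-- The set of all δ-tracing points of sequences of length-`N` orbit segments from `E`
with gaps in `{0,…,τ-1}`. -/
def TraceSet {X : Type*} [MetricSpace X] (f : X → X) (E : Finset X) (N τ : ℕ) (δ : ℝ) :
    Set X :=
  {z | ∃ (C : ℕ → X) (r : ℕ → ℕ), (∀ k, C k ∈ E) ∧ (∀ k, r k < τ) ∧ Traces f N δ C r z}

/-- If `E` is `(N,2γ)`-separated, `2δ < γ`, `y` δ-traces `(C,r)`, `y'` δ-traces `(C',r')`,
the transition times agree at index `n` while `C n ≠ C' n`, then `y` and `y'` are
`((n+1)(N+τ), γ)`-separated. -/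
theorem tracing_points_separated {X : Type*} [MetricSpace X]
    (f : X → X) (hf : Continuous f) (E : Finset X) (N τ : ℕ) (hN : 1 ≤ N) (hτ : 1 ≤ τ)
    (δ γ : ℝ) (hδ : 0 < δ) (hδγ : 2 * δ < γ)
    (hE : ∀ x ∈ E, ∀ y ∈ E, x ≠ y → ∃ k < N, 2 * γ < dist (f^[k] x) (f^[k] y))
    (C C' : ℕ → X) (hC : ∀ k, C k ∈ E) (hC' : ∀ k, C' k ∈ E)
    (r r' : ℕ → ℕ) (hr : ∀ k, r k < τ) (hr' : ∀ k, r' k < τ)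
    (y y' : X) (hy : Traces f N δ C r y) (hy' : Traces f N δ C' r' y')
    (n : ℕ) (ht : ttime N r n = ttime N r' n) (hne : C n ≠ C' n) :
    ∃ k < (n + 1) * (N + τ), γ < dist (f^[k] y) (f^[k] y') := by
  obtain ⟨k, hkN, hk⟩ := hE _ (hC n) _ (hC' n) hne
  refine ⟨ttime N r n + k, ?_, ?_⟩
  · have h1 : ttime N r n ≤ n * (N + τ) := by
      unfold ttime
      calc ∑ i ∈ Finset.range n, (N + r i) ≤ ∑ i ∈ Finset.range n, (N + τ) :=
            Finset.sum_le_sum fun i _ => Nat.add_le_add_left (le_of_lt (hr i)) N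
        _ = n * (N + τ) := by rw [Finset.sum_const, Finset.card_range, smul_eq_mul]
    have h2 : k < N + τ := lt_of_lt_of_le hkN (Nat.le_add_right N τ)
    calc ttime N r n + k < n * (N + τ) + (N + τ) := by omega
      _ = (n + 1) * (N + τ) := by ring
  · have hy1 := hy n k hkN
    have hy2 := hy' n k hkN
    rw [ht] at hy1
    have := dist_triangle4 (f^[k] (C n)) (f^[ttime N r' n + k] y) (f^[ttime N r' n + k] y')
      (f^[k] (C' n))
    rw [dist_comm] at hy1
    rw [ht]
    linarith
end

section
/- Fix sequences y_1,…,y_n ∈ X and gaps w_1,…,w_{n-1} ∈ {0,…,τ-1}, and let W be the set of points z such that d(f^{t_k+j}(z), f^j(y_k)) ≤ δ for all 1 ≤ k ≤ n and 0 ≤ j < N, where t_k = Σ_{i<k}(N+w_i). Then any (nN, 2δ)-separated subset of W has cardinality at most s(X,τ,δ)^{n-1}, where s(X,τ,δ) is the maximal cardinality of a (τ,δ)-separated set in X. -/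
open Filter Topology

/-- Any `(nN, 2δ)`-separated subset of the set `W` of points tracing the fixed
segments `y_1,…,y_n` with fixed gaps `w_1,…,w_{n-1} ∈ {0,…,τ-1}` has cardinality at
most `s(X,τ,δ)^{n-1}`, where `s(X,τ,δ)` is the maximal cardinality of a
`(τ,δ)`-separated set (realized by `S₀`). -/
theorem card_separated_in_traceCylinder_le {X : Type*} [MetricSpace X] [CompactSpace X]
    (f : X → X) (hf : Continuous f) (N τ n : ℕ) (hN : 1 ≤ N) (hτ : 1 ≤ τ) (hn : 1 ≤ n)
    (δ : ℝ) (hδ : 0 < δ)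
    (S₀ : Finset X) (hS₀ : IsSep f τ δ S₀)
    (hS₀max : ∀ S : Finset X, IsSep f τ δ S → S.card ≤ S₀.card)
    (y : ℕ → X) (w : ℕ → ℕ) (hw : ∀ i < n - 1, w i < τ)
    (Q : Finset X)
    (hQW : ∀ z ∈ Q, ∀ k < n, ∀ j < N,
      dist (f^[(∑ i ∈ Finset.range k, (N + w i)) + j] z) (f^[j] (y k)) ≤ δ)
    (hQsep : IsSep f (n * N) (2 * δ) Q) :
    Q.card ≤ S₀.card ^ (n - 1) := by
  classical
  set T : ℕ → ℕ := fun k => ∑ i ∈ Finset.range k, (N + w i) with hTdef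
  have hTmono : ∀ k, k * N ≤ T k := by
    intro k
    calc k * N = ∑ _i ∈ Finset.range k, N := by simp [mul_comm]
      _ ≤ T k := Finset.sum_le_sum (fun i _ => Nat.le_add_right N (w i))
  have hTsucc : ∀ k, T (k + 1) = T k + N + w k := by
    intro k
    simp [hTdef, Finset.sum_range_succ, Nat.add_assoc]
  have hc : ∀ x : X, ∃ s, s ∈ S₀ ∧ ∀ j < τ, dist (f^[j] x) (f^[j] s) ≤ δ := by
    intro x
    by_contra h
    push_neg at h
    have hx : x ∉ S₀ := by
      intro hx
      obtain ⟨j, hj, hd⟩ := h x hx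
      simp at hd
      linarith
    have hsep : IsSep f τ δ (insert x S₀) := by
      intro a ha b hb hab
      rcases Finset.mem_insert.mp ha with ha1 | ha1
      · rcases Finset.mem_insert.mp hb with hb1 | hb1
        · exact absurd (ha1.trans hb1.symm) hab
        · obtain ⟨j, hj, hd⟩ := h b hb1
          exact ⟨j, hj, by rw [ha1]; exact hd⟩
      · rcases Finset.mem_insert.mp hb with hb1 | hb1
        · obtain ⟨j, hj, hd⟩ := h a ha1
          exact ⟨j, hj, by rw [hb1, dist_comm]; exact hd⟩
        · exact hS₀ a ha1 b hb1 hab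
    have hle := hS₀max _ hsep
    rw [Finset.card_insert_of_notMem hx] at hle
    omega
  choose c hcS hcd using hc
  have key : ∀ z ∈ Q, ∀ z' ∈ Q,
      (∀ k < n - 1, c (f^[T k + N] z) = c (f^[T k + N] z')) → z = z' := by
    intro z hz z' hz' hcc
    by_contra hne
    obtain ⟨m, hm, hd⟩ := hQsep z hz z' hz' hne
    have hclose : dist (f^[m] z) (f^[m] z') ≤ 2 * δ := by
      have hP0 : T 0 ≤ m := by simp [hTdef]
      set K := Nat.findGreatest (fun k => T k ≤ m) n with hK
      have hTK : T K ≤ m := Nat.findGreatest_spec (P := fun k => T k ≤ m) (Nat.zero_le n) hP0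
      have hKle : K ≤ n := Nat.findGreatest_le n
      have hKn : K < n := by
        rcases Nat.lt_or_ge K n with h' | h'
        · exact h'
        · exfalso
          have hKn' : K = n := le_antisymm hKle h'
          have : n * N ≤ m := le_trans (hTmono n) (hKn' ▸ hTK)
          omega
      have hmK1 : m < T (K + 1) := by
        by_contra h'
        exact Nat.findGreatest_is_greatest (P := fun k => T k ≤ m) (Nat.lt_succ_self K) hKn (not_lt.mp h')
      by_cases hcase : m < T K + N
      · -- within a tracing block
        set j := m - T K with hj
        have hjN : j < N := by omega
        have hmeq : T K + j = m := by omega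
        have h1 : dist (f^[m] z) (f^[j] (y K)) ≤ δ := by
          rw [← hmeq]; exact hQW z hz K hKn j hjN
        have h2 : dist (f^[m] z') (f^[j] (y K)) ≤ δ := by
          rw [← hmeq]; exact hQW z' hz' K hKn j hjN
        calc dist (f^[m] z) (f^[m] z')
            ≤ dist (f^[m] z) (f^[j] (y K)) + dist (f^[j] (y K)) (f^[m] z') :=
              dist_triangle _ _ _
          _ ≤ δ + δ := add_le_add h1 (by rwa [dist_comm])
          _ = 2 * δ := by ring
      · -- within a gap
        have hKn1 : K < n - 1 := by
          by_contra h'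
          have hKeq : K = n - 1 := by omega
          have hnn : (n - 1) * N + N = n * N := by
            cases n with
            | zero => omega
            | succ n => simp [Nat.succ_mul]
          have h1 : (n - 1) * N ≤ T (n - 1) := hTmono (n - 1)
          have h2 : T (n - 1) + N ≤ m := by rw [← hKeq]; omega
          omega
        have hjw : m - (T K + N) < w K := by
          have := hTsucc K
          omega
        have hjτ : m - (T K + N) < τ := lt_of_lt_of_le hjw (le_of_lt (hw K hKn1))
        set j := m - (T K + N) with hj
        set s := c (f^[T K + N] z) with hs
        have h1 : dist (f^[j] (f^[T K + N] z)) (f^[j] s) ≤ δ := hcd _ j hjτ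
        have h2 : dist (f^[j] (f^[T K + N] z')) (f^[j] s) ≤ δ := by
          rw [hs, hcc K hKn1]
          exact hcd _ j hjτ
        have hiter : ∀ x : X, f^[m] x = f^[j] (f^[T K + N] x) := by
          intro x
          rw [← Function.iterate_add_apply]
          congr 1
          omega
        rw [hiter z, hiter z']
        calc dist (f^[j] (f^[T K + N] z)) (f^[j] (f^[T K + N] z'))
            ≤ dist (f^[j] (f^[T K + N] z)) (f^[j] s)
              + dist (f^[j] s) (f^[j] (f^[T K + N] z')) := dist_triangle _ _ _
          _ ≤ δ + δ := add_le_add h1 (by rwa [dist_comm])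
          _ = 2 * δ := by ring
    linarith
  -- injective map into functions
  let Φ : {z // z ∈ Q} → (Fin (n - 1) → {s // s ∈ S₀}) :=
    fun z k => ⟨c (f^[T k + N] z.1), hcS _⟩
  have hinj : Function.Injective Φ := by
    intro z z' h
    refine Subtype.ext (key z.1 z.2 z'.1 z'.2 ?_)
    intro k hk
    have := congrFun h ⟨k, hk⟩
    exact congrArg Subtype.val this
  have hcard := Fintype.card_le_of_injective Φ hinj
  simpa [Fintype.card_coe, Fintype.card_fun] using hcard
end
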